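/- Let k ≥ 2 and let (r₀,s₀),…,(r_k,s_k) ∈ ℝ². Assume that for all z₁,…,z_k > 0: χ_{−r₀,−s₀}(z₁⋯z_k) ≤ ∑_{j=1}^k χ_{r_j,s_j}(z_j). Then for all n ∈ ℕ, all λ ∈ ℝ₊ⁿ with ∑λᵢ = 1, and all x ∈ ℝ₊^{n×k}: G_{−r₀,−s₀;λ}(x₁¹⋯x₁^k, …, xₙ¹⋯xₙ^k) ≤ G_{r₁,s₁;λ}(x¹) ⋯ G_{r_k,s_k;λ}(x^k). -/

import Mathlib

open Finset

/-- The weighted Gini mean `G_{r,s;λ}` (both cases `r ≠ s` and `r = s`). -/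
noncomputable def giniMean {n : ℕ} (r s : ℝ) (l : Fin n → ℝ) (x : Fin n → ℝ) : ℝ :=
  if r = s then
    Real.exp ((∑ i, l i * x i ^ r * Real.log (x i)) / ∑ i, l i * x i ^ r)
  else ((∑ i, l i * x i ^ r) / (∑ i, l i * x i ^ s)) ^ ((r - s)⁻¹)

/-- The auxiliary function `χ_{r,s}`. -/
noncomputable def chi (r s t : ℝ) : ℝ :=
  if r = s then t ^ r * Real.log t else (t ^ r - t ^ s) / (r - s)

lemma sum_rpow_pos {n : ℕ} (l x : Fin n → ℝ) (hl : ∀ i, 0 < l i) (hx : ∀ i, 0 < x i)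
    (hn : Nonempty (Fin n)) (r : ℝ) : 0 < ∑ i, l i * x i ^ r :=
  Finset.sum_pos (fun i _ => mul_pos (hl i) (Real.rpow_pos_of_pos (hx i) r))
    Finset.univ_nonempty

lemma gini_pos {n : ℕ} (r s : ℝ) (l x : Fin n → ℝ) (hl : ∀ i, 0 < l i)
    (hx : ∀ i, 0 < x i) (hn : Nonempty (Fin n)) : 0 < giniMean r s l x := by
  unfold giniMean
  split
  · exact Real.exp_pos _
  · exact Real.rpow_pos_of_pos
      (div_pos (sum_rpow_pos l x hl hx hn r) (sum_rpow_pos l x hl hx hn s)) _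

lemma sum_chi_ne {n : ℕ} (r s : ℝ) (hrs : r ≠ s) (l x : Fin n → ℝ)
    (hx : ∀ i, 0 < x i) (t : ℝ) (ht : 0 < t) :
    ∑ i, l i * chi r s (x i / t)
      = ((∑ i, l i * x i ^ r) / t ^ r - (∑ i, l i * x i ^ s) / t ^ s) / (r - s) := by
  have h : ∀ i ∈ Finset.univ, l i * chi r s (x i / t)
      = (l i * x i ^ r / t ^ r - l i * x i ^ s / t ^ s) / (r - s) := by
    intro i _
    rw [chi, if_neg hrs, Real.div_rpow (hx i).le ht.le, Real.div_rpow (hx i).le ht.le]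
    ring
  rw [Finset.sum_congr rfl h, ← Finset.sum_div, Finset.sum_sub_distrib,
    ← Finset.sum_div, ← Finset.sum_div]

lemma sum_chi_eqc {n : ℕ} (r : ℝ) (l x : Fin n → ℝ)
    (hx : ∀ i, 0 < x i) (t : ℝ) (ht : 0 < t) :
    ∑ i, l i * chi r r (x i / t)
      = ((∑ i, l i * x i ^ r * Real.log (x i))
          - Real.log t * ∑ i, l i * x i ^ r) / t ^ r := by
  have h : ∀ i ∈ Finset.univ, l i * chi r r (x i / t)
      = (l i * x i ^ r * Real.log (x i) - Real.log t * (l i * x i ^ r)) / t ^ r := by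
    intro i _
    rw [chi, if_pos rfl, Real.div_rpow (hx i).le ht.le, Real.log_div (hx i).ne' ht.ne']
    ring
  rw [Finset.sum_congr rfl h, ← Finset.sum_div, Finset.sum_sub_distrib, ← Finset.mul_sum]

lemma sum_chi_gini_zero {n : ℕ} (r s : ℝ) (l x : Fin n → ℝ) (hl : ∀ i, 0 < l i)
    (hx : ∀ i, 0 < x i) (hn : Nonempty (Fin n)) :
    ∑ i, l i * chi r s (x i / giniMean r s l x) = 0 := by
  have hG := gini_pos r s l x hl hx hn
  have hA := sum_rpow_pos l x hl hx hn r
  have hB := sum_rpow_pos l x hl hx hn s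
  by_cases hrs : r = s
  · subst hrs
    rw [sum_chi_eqc r l x hx _ hG, div_eq_zero_iff]
    left
    have : Real.log (giniMean r r l x)
        = (∑ i, l i * x i ^ r * Real.log (x i)) / ∑ i, l i * x i ^ r := by
      rw [giniMean, if_pos rfl, Real.log_exp]
    rw [this]
    field_simp
    ring
  · rw [sum_chi_ne r s hrs l x hx _ hG, div_eq_zero_iff]
    left
    have hGr : giniMean r s l x ^ (r - s)
        = (∑ i, l i * x i ^ r) / (∑ i, l i * x i ^ s) := by
      rw [giniMean, if_neg hrs]
      exact Real.rpow_inv_rpow (div_nonneg hA.le hB.le) (sub_ne_zero.mpr hrs)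
    rw [Real.rpow_sub hG] at hGr
    have hGr' : (0:ℝ) < giniMean r s l x ^ r := Real.rpow_pos_of_pos hG r
    have hGs' : (0:ℝ) < giniMean r s l x ^ s := Real.rpow_pos_of_pos hG s
    rw [div_eq_div_iff hGs'.ne' hB.ne'] at hGr
    rw [sub_eq_zero, div_eq_div_iff hGr'.ne' hGs'.ne']
    linarith
    
lemma gini_le_of {n : ℕ} (r s : ℝ) (l x : Fin n → ℝ) (hl : ∀ i, 0 < l i)
    (hx : ∀ i, 0 < x i) (hn : Nonempty (Fin n)) (t : ℝ) (ht : 0 < t)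
    (h : ∑ i, l i * chi r s (x i / t) ≤ 0) : giniMean r s l x ≤ t := by
  have hA := sum_rpow_pos l x hl hx hn r
  have hB := sum_rpow_pos l x hl hx hn s
  have htr : (0:ℝ) < t ^ r := Real.rpow_pos_of_pos ht r
  have hts : (0:ℝ) < t ^ s := Real.rpow_pos_of_pos ht s
  by_cases hrs : r = s
  · subst hrs
    rw [sum_chi_eqc r l x hx t ht] at h
    have h1 : (∑ i, l i * x i ^ r * Real.log (x i))
        - Real.log t * ∑ i, l i * x i ^ r ≤ 0 := by
      by_contra hc
      push_neg at hc
      exact absurd h (not_le.mpr (div_pos hc htr))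
    rw [giniMean, if_pos rfl]
    calc Real.exp ((∑ i, l i * x i ^ r * Real.log (x i)) / ∑ i, l i * x i ^ r)
        ≤ Real.exp (Real.log t) := by
          apply Real.exp_le_exp.mpr
          rw [div_le_iff₀ hA]
          linarith
      _ = t := Real.exp_log ht
  · rw [sum_chi_ne r s hrs l x hx t ht] at h
    rw [giniMean, if_neg hrs]
    rcases lt_or_gt_of_ne hrs with hlt | hgt
    · -- r < s : numerator ≥ 0
      have h1 : 0 ≤ (∑ i, l i * x i ^ r) / t ^ r - (∑ i, l i * x i ^ s) / t ^ s := by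
        by_contra hc
        push_neg at hc
        exact absurd h (not_le.mpr (div_pos_of_neg_of_neg hc (by linarith)))
      have h2 : t ^ (r - s) ≤ (∑ i, l i * x i ^ r) / (∑ i, l i * x i ^ s) := by
        rw [Real.rpow_sub ht, div_le_div_iff₀ hts hB]
        rw [sub_nonneg, div_le_div_iff₀ hts htr] at h1
        linarith
      have := Real.rpow_le_rpow_of_nonpos (Real.rpow_pos_of_pos ht (r - s)) h2
        (inv_nonpos.mpr (by linarith) : (r - s)⁻¹ ≤ 0)
      rwa [Real.rpow_rpow_inv ht.le (sub_ne_zero.mpr hrs)] at this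
    · -- r > s : numerator ≤ 0
      have h1 : (∑ i, l i * x i ^ r) / t ^ r - (∑ i, l i * x i ^ s) / t ^ s ≤ 0 := by
        by_contra hc
        push_neg at hc
        exact absurd h (not_le.mpr (div_pos hc (by linarith)))
      have h2 : (∑ i, l i * x i ^ r) / (∑ i, l i * x i ^ s) ≤ t ^ (r - s) := by
        rw [Real.rpow_sub ht, div_le_div_iff₀ hB hts]
        rw [sub_nonpos, div_le_div_iff₀ htr hts] at h1
        linarith
      have := Real.rpow_le_rpow (div_nonneg hA.le hB.le) h2
        (inv_nonneg.mpr (by linarith) : (0:ℝ) ≤ (r - s)⁻¹)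
      rwa [Real.rpow_rpow_inv ht.le (sub_ne_zero.mpr hrs)] at this

theorem gini_holder_global
    (k : ℕ) (hk : 2 ≤ k) (r s : Fin (k + 1) → ℝ)
    (key : ∀ z : Fin k → ℝ, (∀ j, 0 < z j) →
      chi (-(r 0)) (-(s 0)) (∏ j, z j) ≤ ∑ j, chi (r j.succ) (s j.succ) (z j))
    (n : ℕ) (l : Fin n → ℝ) (hl : ∀ i, 0 < l i) (hl1 : ∑ i, l i = 1)
    (x : Fin n → Fin k → ℝ) (hx : ∀ i j, 0 < x i j) :
    giniMean (-(r 0)) (-(s 0)) l (fun i => ∏ j, x i j) ≤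
      ∏ j, giniMean (r j.succ) (s j.succ) l (fun i => x i j) := by
  have hn : Nonempty (Fin n) := by
    rcases n with _ | n
    · simp at hl1
    · exact ⟨0⟩
  set T : Fin k → ℝ := fun j => giniMean (r j.succ) (s j.succ) l (fun i => x i j) with hT
  have hTpos : ∀ j, 0 < T j := fun j =>
    gini_pos _ _ l _ hl (fun i => hx i j) hn
  have hprod : ∀ i, 0 < ∏ j, x i j :=
    fun i => Finset.prod_pos (fun j _ => hx i j)
  apply gini_le_of _ _ l _ hl hprod hn _ (Finset.prod_pos fun j _ => hTpos j)
  have step : ∀ i, chi (-(r 0)) (-(s 0)) ((∏ j, x i j) / ∏ j, T j)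
      ≤ ∑ j, chi (r j.succ) (s j.succ) (x i j / T j) := by
    intro i
    have := key (fun j => x i j / T j) (fun j => div_pos (hx i j) (hTpos j))
    rwa [← Finset.prod_div_distrib]
  calc ∑ i, l i * chi (-(r 0)) (-(s 0)) ((∏ j, x i j) / ∏ j, T j)
      ≤ ∑ i, l i * ∑ j, chi (r j.succ) (s j.succ) (x i j / T j) :=
        Finset.sum_le_sum fun i _ => mul_le_mul_of_nonneg_left (step i) (hl i).le
    _ = ∑ j, ∑ i, l i * chi (r j.succ) (s j.succ) (x i j / T j) := by
        simp_rw [Finset.mul_sum]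
        exact Finset.sum_comm
    _ = 0 := by
        apply Finset.sum_eq_zero
        intro j _
        exact sum_chi_gini_zero _ _ l _ hl (fun i => hx i j) hn
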